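/- Let E be a finite-dimensional normed space, X a Banach lattice, and T : E → X a bounded linear operator. Then the supremum s = ⋁_{‖z‖ ≤ 1} |Tz| exists in X, and ‖s‖ equals the majorizing norm ‖T‖_m of T, i.e., the smallest M such that ‖⋁_{k=1}^n |T x_k|‖ ≤ M · max_k ‖x_k‖ for all finite families x₁,…,xₙ ∈ E. -/

import Mathlib

open Topology Filter Metric

section Aux
variable {X : Type*} [NormedAddCommGroup X] [Lattice X] [HasSolidNorm X] [IsOrderedAddMonoid X] [NormedSpace ℝ X]

lemma my_half_smul_nonneg {x : X} (hx : 0 ≤ x) : 0 ≤ (2⁻¹ : ℝ) • x := by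
  have h : (2 : ℕ) • ((2⁻¹ : ℝ) • x) = x := by
    rw [← Nat.cast_smul_eq_nsmul ℝ, ← mul_smul]; norm_num
  exact nsmul_two_semiclosed (by rw [h]; exact hx)

lemma my_rsmul_nonneg {r : ℝ} (hr : 0 ≤ r) {x : X} (hx : 0 ≤ x) : 0 ≤ r • x := by
  have hpow : ∀ k : ℕ, 0 ≤ ((2⁻¹ : ℝ) ^ k) • x := by
    intro k
    induction k with
    | zero => simpa using hx
    | succ k ih =>
      have h := my_half_smul_nonneg ih
      rwa [← mul_smul, ← pow_succ'] at h
  have hdy : ∀ n k : ℕ, 0 ≤ ((n : ℝ) * (2⁻¹ : ℝ) ^ k) • x := by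
    intro n k
    rw [mul_smul, Nat.cast_smul_eq_nsmul]
    exact nsmul_nonneg (hpow k) n
  set q : ℕ → ℝ := fun m => (⌊r * 2 ^ m⌋₊ : ℝ) * (2⁻¹ : ℝ) ^ m with hq
  have h2m : ∀ m : ℕ, (0:ℝ) < 2 ^ m := fun m => by positivity
  have hqu : ∀ m, q m ≤ r := by
    intro m
    have h1 : (⌊r * 2 ^ m⌋₊ : ℝ) ≤ r * 2 ^ m := Nat.floor_le (by positivity)
    calc q m ≤ (r * 2 ^ m) * (2⁻¹ : ℝ) ^ m := by
          exact mul_le_mul_of_nonneg_right h1 (by positivity)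
      _ = r := by rw [inv_pow]; field_simp
  have hql : ∀ m, r - (2⁻¹ : ℝ) ^ m ≤ q m := by
    intro m
    have h1 : r * 2 ^ m - 1 ≤ (⌊r * 2 ^ m⌋₊ : ℝ) := (Nat.sub_one_lt_floor _).le
    calc r - (2⁻¹ : ℝ) ^ m = (r * 2 ^ m - 1) * (2⁻¹ : ℝ) ^ m := by
          rw [inv_pow]; field_simp
      _ ≤ q m := mul_le_mul_of_nonneg_right h1 (by positivity)
  have hten : Tendsto q atTop (𝓝 r) := by
    have hgeo : Tendsto (fun m : ℕ => (2⁻¹ : ℝ) ^ m) atTop (𝓝 0) :=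
      tendsto_pow_atTop_nhds_zero_of_lt_one (by norm_num) (by norm_num)
    have hlo : Tendsto (fun m : ℕ => r - (2⁻¹ : ℝ) ^ m) atTop (𝓝 r) := by
      simpa using tendsto_const_nhds.sub hgeo
    exact tendsto_of_tendsto_of_tendsto_of_le_of_le hlo tendsto_const_nhds hql hqu
  have hsm : Tendsto (fun m => q m • x) atTop (𝓝 (r • x)) := hten.smul_const x
  exact ge_of_tendsto' hsm fun m => hdy _ m

lemma my_smul_le_smul_left {r : ℝ} (hr : 0 ≤ r) {a b : X} (h : a ≤ b) : r • a ≤ r • b := by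
  have h2 := my_rsmul_nonneg hr (sub_nonneg.2 h)
  rw [smul_sub] at h2
  exact sub_nonneg.mp h2

lemma my_smul_le_smul_right {r t : ℝ} (h : r ≤ t) {x : X} (hx : 0 ≤ x) : r • x ≤ t • x := by
  have h2 := my_rsmul_nonneg (sub_nonneg.2 h) hx
  rw [sub_smul] at h2
  exact sub_nonneg.mp h2

lemma my_abs_smul_le (r : ℝ) (y : X) : |r • y| ≤ |r| • |y| := by
  rcases le_total 0 r with h | h
  · rw [abs_of_nonneg h, abs_le']
    constructor
    · exact my_smul_le_smul_left h (le_abs_self y)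
    · rw [← smul_neg]
      exact my_smul_le_smul_left h (neg_le_abs y)
  · have h1 : r • y = |r| • (-y) := by
      rw [abs_of_nonpos h, neg_smul, smul_neg, neg_neg]
    rw [h1, abs_le']
    constructor
    · exact my_smul_le_smul_left (abs_nonneg r) (by simpa using neg_le_abs y)
    · rw [← smul_neg]
      exact my_smul_le_smul_left (abs_nonneg r) (by simpa using le_abs_self y)

lemma my_abs_sum_le {ι : Type*} (s : Finset ι) (f : ι → X) :
    |∑ i ∈ s, f i| ≤ ∑ i ∈ s, |f i| := by
  classical
  induction s using Finset.cons_induction with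
  | empty => simp
  | cons a s ha ih =>
    rw [Finset.sum_cons, Finset.sum_cons]
    exact (abs_add_le _ _).trans (add_le_add_right ih _)

end Aux

theorem stmt17 (E X : Type*) [NormedAddCommGroup E] [NormedSpace ℝ E]
    [FiniteDimensional ℝ E]
    [NormedAddCommGroup X] [Lattice X] [HasSolidNorm X] [IsOrderedAddMonoid X] [NormedSpace ℝ X] [CompleteSpace X]
    (T : E →L[ℝ] X) :
    ∃ s : X, IsLUB {y : X | ∃ z : E, ‖z‖ ≤ 1 ∧ y = |T z|} s ∧
      ‖s‖ = sInf {M : ℝ | ∀ (n : ℕ) (x : Fin (n + 1) → E),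
        ‖Finset.univ.sup' Finset.univ_nonempty (fun k => |T (x k)|)‖ ≤
          M * Finset.univ.sup' Finset.univ_nonempty (fun k => ‖x k‖)} := by
  classical
  -- basis, coordinate functionals, and the dominating element u
  set b : Module.Basis (Fin (Module.finrank ℝ E)) ℝ E := Module.finBasis ℝ E with hb
  set φ : Fin (Module.finrank ℝ E) → E →L[ℝ] ℝ :=
    fun i => LinearMap.toContinuousLinearMap (b.coord i) with hφ
  set u : X := ∑ i, ‖φ i‖ • |T (b i)| with hu
  have hu0 : 0 ≤ u :=
    Finset.sum_nonneg fun i _ => my_rsmul_nonneg (norm_nonneg _) (abs_nonneg _)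
  have hub : ∀ v : E, |T v| ≤ ‖v‖ • u := by
    intro v
    have h1 : |T v| ≤ ∑ i, |(b.repr v i) • T (b i)| := by
      have hv : T v = ∑ i, (b.repr v i) • T (b i) := by
        conv_lhs => rw [← Module.Basis.sum_repr b v]
        rw [map_sum]
        exact Finset.sum_congr rfl fun i _ => by rw [map_smul]
      rw [hv]
      exact my_abs_sum_le _ _
    have h2 : ∀ i, |(b.repr v i) • T (b i)| ≤ (‖φ i‖ * ‖v‖) • |T (b i)| := by
      intro i
      refine (my_abs_smul_le _ _).trans ?_
      refine my_smul_le_smul_right ?_ (abs_nonneg _)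
      have := (φ i).le_opNorm v
      simpa [hφ, Real.norm_eq_abs, Module.Basis.coord_apply] using this
    calc |T v| ≤ ∑ i, |(b.repr v i) • T (b i)| := h1
      _ ≤ ∑ i, (‖φ i‖ * ‖v‖) • |T (b i)| := Finset.sum_le_sum fun i _ => h2 i
      _ = ‖v‖ • u := by
          rw [hu, Finset.smul_sum]
          exact Finset.sum_congr rfl fun i _ => by rw [← mul_smul, mul_comm]
  -- dense sequence in the closed unit ball
  set s1 : Set E := closedBall (0:E) 1 with hs1
  haveI : Nonempty s1 := ⟨⟨0, mem_closedBall_self zero_le_one⟩⟩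
  set w : ℕ → E := fun n => (TopologicalSpace.denseSeq s1 n : E) with hw
  have hw1 : ∀ n, ‖w n‖ ≤ 1 := by
    intro n
    have h : w n ∈ s1 := (TopologicalSpace.denseSeq s1 n).2
    rw [hs1] at h
    rwa [mem_closedBall, dist_zero_right] at h
  have hwd : ∀ z : E, ‖z‖ ≤ 1 → ∀ ε : ℝ, 0 < ε → ∃ k, ‖z - w k‖ < ε := by
    intro z hz ε hε
    have hz' : z ∈ s1 := by simpa [hs1, mem_closedBall, dist_zero_right] using hz
    obtain ⟨k, hk⟩ := (TopologicalSpace.denseRange_denseSeq s1).exists_dist_lt ⟨z, hz'⟩ hε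
    exact ⟨k, by simpa [Subtype.dist_eq, dist_eq_norm] using hk⟩
  -- finite nets
  have hnet : ∀ ε : ℝ, 0 < ε → ∃ N : ℕ, ∀ z : E, ‖z‖ ≤ 1 → ∃ k ≤ N, ‖z - w k‖ < ε := by
    intro ε hε
    have hc : IsCompact s1 := isCompact_closedBall 0 1
    have hcover : s1 ⊆ ⋃ k : ℕ, ball (w k) ε := by
      intro z hz
      obtain ⟨k, hk⟩ := hwd z (by simpa [hs1, mem_closedBall, dist_zero_right] using hz) ε hε
      exact Set.mem_iUnion.2 ⟨k, by simpa [mem_ball, dist_eq_norm] using hk⟩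
    obtain ⟨t, ht⟩ := hc.elim_finite_subcover (fun k : ℕ => ball (w k) ε)
      (fun k => isOpen_ball) hcover
    refine ⟨t.sup id, fun z hz => ?_⟩
    have hz' : z ∈ s1 := by simpa [hs1, mem_closedBall, dist_zero_right] using hz
    obtain ⟨k, hkt, hk⟩ := Set.mem_iUnion₂.1 (ht hz')
    exact ⟨k, Finset.le_sup (f := id) hkt, by simpa [mem_ball, dist_eq_norm] using hk⟩
  -- the approximating sequence
  have hne : ∀ n : ℕ, (Finset.range (n+1)).Nonempty := fun n => ⟨0, by simp⟩
  set S : ℕ → X := fun n => (Finset.range (n+1)).sup' (hne n) (fun k => |T (w k)|) with hS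
  have hSmono : Monotone S := by
    intro m n h
    exact Finset.sup'_mono _ (Finset.range_subset_range.2 (by omega)) _
  have hmem : ∀ n k, k ≤ n → |T (w k)| ≤ S n := by
    intro n k hk
    exact Finset.le_sup' (fun k => |T (w k)|) (Finset.mem_range.2 (by omega))
  have hcauchy : CauchySeq S := by
    rw [Metric.cauchySeq_iff']
    intro ε hε
    set δ : ℝ := ε / (‖u‖ + 1) with hδdef
    have hδ : 0 < δ := by positivity
    obtain ⟨N, hN⟩ := hnet δ hδ
    refine ⟨N, fun n hn => ?_⟩
    have h1 : S N ≤ S n := hSmono (by omega)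
    have h2 : S n ≤ S N + δ • u := by
      apply Finset.sup'_le
      intro k _
      obtain ⟨j, hjN, hjd⟩ := hN (w k) (hw1 k)
      have e1 : |T (w k)| ≤ |T (w j)| + |T (w k - w j)| := by
        have hT : T (w k) = T (w j) + T (w k - w j) := by rw [map_sub]; abel
        rw [hT]; exact abs_add_le _ _
      refine e1.trans (add_le_add (hmem N j hjN) ?_)
      exact (hub _).trans (my_smul_le_smul_right hjd.le hu0)
    have h3 : ‖S n - S N‖ ≤ δ * ‖u‖ := by
      have habs : |S n - S N| ≤ |δ • u| := by
        rw [abs_of_nonneg (sub_nonneg.2 h1), abs_of_nonneg (my_rsmul_nonneg hδ.le hu0)]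
        exact sub_le_iff_le_add.2 (by rwa [add_comm] at h2)
      calc ‖S n - S N‖ ≤ ‖δ • u‖ := norm_le_norm_of_abs_le_abs habs
        _ = δ * ‖u‖ := by rw [norm_smul, Real.norm_eq_abs, abs_of_nonneg hδ.le]
    have h4 : δ * ‖u‖ < ε := by
      have : δ * ‖u‖ < δ * (‖u‖ + 1) := by
        exact mul_lt_mul_of_pos_left (by linarith) hδ
      have he : δ * (‖u‖ + 1) = ε := by
        rw [hδdef]; field_simp
      linarith
    rw [dist_eq_norm]
    linarith
  obtain ⟨s, hs⟩ := cauchySeq_tendsto_of_complete hcauchy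
  have hSls : ∀ n, S n ≤ s := hSmono.ge_of_tendsto hs
  have hsub : ∀ z : E, ‖z‖ ≤ 1 → |T z| ≤ s := by
    intro z hz
    have key : ∀ m : ℕ, |T z| ≤ s + (1/((m:ℝ)+1)) • u := by
      intro m
      obtain ⟨k, hk⟩ := hwd z hz (1/((m:ℝ)+1)) (by positivity)
      have e1 : |T z| ≤ |T (w k)| + |T (z - w k)| := by
        have hT : T z = T (w k) + T (z - w k) := by rw [map_sub]; abel
        rw [hT]; exact abs_add_le _ _
      refine e1.trans (add_le_add ((hmem k k le_rfl).trans (hSls k)) ?_)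
      exact (hub _).trans (my_smul_le_smul_right hk.le hu0)
    have ht : Tendsto (fun m : ℕ => s + (1/((m:ℝ)+1)) • u) atTop (𝓝 s) := by
      have h0 : Tendsto (fun m : ℕ => (1/((m:ℝ)+1)) • u) atTop (𝓝 ((0:ℝ) • u)) :=
        tendsto_one_div_add_atTop_nhds_zero_nat.smul_const u
      simpa using tendsto_const_nhds.add h0
    exact ge_of_tendsto' ht key
  have hIsLUB : IsLUB {y : X | ∃ z : E, ‖z‖ ≤ 1 ∧ y = |T z|} s := by
    constructor
    · rintro y ⟨z, hz, rfl⟩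
      exact hsub z hz
    · intro c hc
      refine le_of_tendsto' hs fun n => ?_
      exact Finset.sup'_le _ _ fun k _ => hc ⟨w k, hw1 k, rfl⟩
  refine ⟨s, hIsLUB, ?_⟩
  have hs0 : 0 ≤ s := (abs_nonneg (T 0)).trans (hsub 0 (by simp))
  set MS := {M : ℝ | ∀ (n : ℕ) (x : Fin (n + 1) → E),
        ‖Finset.univ.sup' Finset.univ_nonempty (fun k => |T (x k)|)‖ ≤
          M * Finset.univ.sup' Finset.univ_nonempty (fun k => ‖x k‖)} with hMS
  have hmemS : ‖s‖ ∈ MS := by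
    intro n x
    set r : ℝ := Finset.univ.sup' Finset.univ_nonempty (fun k => ‖x k‖) with hr
    have hxk : ∀ k, ‖x k‖ ≤ r := fun k => Finset.le_sup' (fun k => ‖x k‖) (Finset.mem_univ k)
    have hr0 : 0 ≤ r := (norm_nonneg (x 0)).trans (hxk 0)
    rcases eq_or_lt_of_le hr0 with h0 | hpos
    · have hx0 : ∀ k, x k = 0 := fun k =>
        norm_le_zero_iff.1 ((hxk k).trans h0.symm.le)
      have hz : Finset.univ.sup' Finset.univ_nonempty (fun k : Fin (n+1) => |T (x k)|) = 0 := by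
        rw [Finset.sup'_congr Finset.univ_nonempty rfl
          (fun k _ => by rw [hx0 k, map_zero, abs_zero] : ∀ k ∈ Finset.univ, |T (x k)| = (0:X))]
        exact Finset.sup'_const _ _
      rw [hz, ← h0]
      simp
    · have hkey : ∀ k, |T (x k)| ≤ r • s := by
        intro k
        have hzn : ‖r⁻¹ • x k‖ ≤ 1 := by
          rw [norm_smul, Real.norm_eq_abs, abs_of_nonneg (inv_nonneg.2 hr0)]
          calc r⁻¹ * ‖x k‖ ≤ r⁻¹ * r :=
              mul_le_mul_of_nonneg_left (hxk k) (inv_nonneg.2 hr0)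
            _ = 1 := inv_mul_cancel₀ hpos.ne'
        have h1 : |T (r⁻¹ • x k)| ≤ s := hsub _ hzn
        have h2 : T (x k) = r • T (r⁻¹ • x k) := by
          rw [← map_smul, smul_inv_smul₀ hpos.ne']
        calc |T (x k)| = |r • T (r⁻¹ • x k)| := by rw [h2]
          _ ≤ |r| • |T (r⁻¹ • x k)| := my_abs_smul_le _ _
          _ = r • |T (r⁻¹ • x k)| := by rw [abs_of_nonneg hr0]
          _ ≤ r • s := my_smul_le_smul_left hr0 h1
      have hsup : Finset.univ.sup' Finset.univ_nonempty (fun k : Fin (n+1) => |T (x k)|) ≤ r • s :=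
        Finset.sup'_le _ _ fun k _ => hkey k
      have hnn : (0:X) ≤ Finset.univ.sup' Finset.univ_nonempty (fun k : Fin (n+1) => |T (x k)|) :=
        (abs_nonneg (T (x 0))).trans (Finset.le_sup' (fun k : Fin (n+1) => |T (x k)|) (Finset.mem_univ 0))
      have hnorm : ‖Finset.univ.sup' Finset.univ_nonempty (fun k : Fin (n+1) => |T (x k)|)‖ ≤ ‖r • s‖ := by
        refine norm_le_norm_of_abs_le_abs ?_
        rw [abs_of_nonneg hnn, abs_of_nonneg (my_rsmul_nonneg hr0 hs0)]
        exact hsup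
      calc ‖Finset.univ.sup' Finset.univ_nonempty (fun k : Fin (n+1) => |T (x k)|)‖
          ≤ ‖r • s‖ := hnorm
        _ = ‖s‖ * r := by
            rw [norm_smul, Real.norm_eq_abs, abs_of_nonneg hr0, mul_comm]
  rcases subsingleton_or_nontrivial E with hE | hE
  · have hs' : s = 0 := by
      refine le_antisymm ?_ hs0
      refine hIsLUB.2 ?_
      rintro y ⟨z, _, rfl⟩
      rw [Subsingleton.elim z 0, map_zero, abs_zero]
    have hnb : ¬ BddBelow MS := by
      rintro ⟨c, hc⟩
      have h1 : (c - 1) ∈ MS := by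
        intro n x
        have hx0 : ∀ k : Fin (n+1), x k = 0 := fun k => Subsingleton.elim _ _
        have hz1 : Finset.univ.sup' Finset.univ_nonempty (fun k : Fin (n+1) => |T (x k)|) = 0 := by
          rw [Finset.sup'_congr Finset.univ_nonempty rfl
            (fun k _ => by rw [hx0 k, map_zero, abs_zero] : ∀ k ∈ Finset.univ, |T (x k)| = (0:X))]
          exact Finset.sup'_const _ _
        have hz2 : Finset.univ.sup' Finset.univ_nonempty (fun k : Fin (n+1) => ‖x k‖) = 0 := by
          rw [Finset.sup'_congr Finset.univ_nonempty rfl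
            (fun k _ => by rw [hx0 k, norm_zero] : ∀ k ∈ Finset.univ, ‖x k‖ = (0:ℝ))]
          exact Finset.sup'_const _ _
        rw [hz1, hz2]
        simp
      have := hc h1
      linarith
    rw [hs', Real.sInf_of_not_bddBelow hnb, norm_zero]
  · obtain ⟨e, he⟩ := exists_norm_eq E (zero_le_one (α := ℝ))
    have hlb : ∀ M ∈ MS, ‖s‖ ≤ M := by
      intro M hM
      have hM0 : 0 ≤ M := by
        have h := hM 0 (fun _ => e)
        rw [Finset.sup'_const, Finset.sup'_const, he, mul_one] at h
        exact (norm_nonneg _).trans h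
      have hSn : ∀ n, ‖S n‖ ≤ M := by
        intro n
        have h := hM n (fun k => w (k : ℕ))
        have ekey : Finset.univ.sup' Finset.univ_nonempty (fun k : Fin (n+1) => |T (w (k:ℕ))|) = S n := by
          apply le_antisymm
          · exact Finset.sup'_le _ _ fun k _ =>
              Finset.le_sup' (fun k => |T (w k)|) (Finset.mem_range.2 k.isLt)
          · refine Finset.sup'_le _ _ fun k hk => ?_
            have hk' : k < n + 1 := Finset.mem_range.1 hk
            exact Finset.le_sup' (fun k : Fin (n+1) => |T (w (k:ℕ))|)
              (Finset.mem_univ (⟨k, hk'⟩ : Fin (n+1)))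
        have e2 : Finset.univ.sup' Finset.univ_nonempty (fun k : Fin (n+1) => ‖w (k:ℕ)‖) ≤ 1 :=
          Finset.sup'_le _ _ fun k _ => hw1 _
        rw [ekey] at h
        calc ‖S n‖ ≤ M * Finset.univ.sup' Finset.univ_nonempty (fun k : Fin (n+1) => ‖w (k:ℕ)‖) := h
          _ ≤ M * 1 := mul_le_mul_of_nonneg_left e2 hM0
          _ = M := mul_one M
      have hts : Tendsto (fun n => ‖S n‖) atTop (𝓝 ‖s‖) := hs.norm
      exact le_of_tendsto' hts hSn
    exact le_antisymm (le_csInf ⟨‖s‖, hmemS⟩ hlb)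
      (csInf_le ⟨0, fun M hM => (norm_nonneg s).trans (hlb M hM)⟩ hmemS)
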